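/- For every fixed integer δ ≥ 0, Σ_{(δ1,δ2,δ3)} 12^{δ1} · 8^{δ2} · 4^{δ3} · T_{δ1}(d) · T_{δ2}(d) · T_{δ3}(d) = (24d)^δ/δ! + O(d^{δ−1}) as d → ∞, where the sum ranges over all ordered triples (δ1, δ2, δ3) of nonnegative integers with δ1 + δ2 + δ3 = δ. -/

import Mathlib

open Filter Asymptotics

/-- `T k d` is the number of weakly decreasing integer tuples `d ≥ i₁ ≥ ⋯ ≥ i_k ≥ 1`,
evaluated in `ℝ`, with `T 0 d = 1`. -/
noncomputable def T : ℕ → ℕ → ℝ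
  | 0, _ => 1
  | k + 1, d => ∑ i ∈ Finset.Icc 1 d, T k i

noncomputable def pk (k d : ℕ) : ℝ :=
  (∏ i ∈ Finset.range k, ((d : ℝ) + i)) / (Nat.factorial k)

lemma pk_sum (k d : ℕ) : ∑ i ∈ Finset.Icc 1 d, pk k i = pk (k + 1) d := by
  induction d with
  | zero =>
      rw [show Finset.Icc 1 0 = ∅ by rfl, Finset.sum_empty, pk,
        Finset.prod_eq_zero (Finset.mem_range.2 (Nat.succ_pos k))]
      · simp
      · simp
  | succ d ih =>
      rw [Finset.sum_Icc_succ_top (by omega : 1 ≤ d + 1), ih]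
      unfold pk
      rw [Finset.prod_range_succ' (fun i => ((d : ℝ) + i)) k,
        Finset.prod_range_succ (fun i => (((d + 1 : ℕ) : ℝ)) + i) k]
      have h1 : ∀ i ∈ Finset.range k, ((d : ℝ) + ((i + 1 : ℕ) : ℝ)) = (((d + 1 : ℕ) : ℝ) + i) := by
        intro i _; push_cast; ring
      rw [Finset.prod_congr rfl h1]
      have hf : (Nat.factorial (k + 1) : ℝ) = (k + 1) * Nat.factorial k := by
        push_cast [Nat.factorial_succ]; ring
      have hfk : (Nat.factorial k : ℝ) ≠ 0 := Nat.cast_ne_zero.2 (Nat.factorial_ne_zero k)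
      rw [hf]
      push_cast
      field_simp
      ring

lemma T_eq (k d : ℕ) : T k d = pk k d := by
  induction k generalizing d with
  | zero => simp [T, pk]
  | succ k ih =>
      show (∑ i ∈ Finset.Icc 1 d, T k i) = _
      rw [Finset.sum_congr rfl (fun i _ => ih i), pk_sum]

lemma zpow_isBigO {a b : ℤ} (h : a ≤ b) :
    (fun d : ℕ => (d : ℝ) ^ a) =O[atTop] fun d : ℕ => (d : ℝ) ^ b := by
  apply IsBigO.of_bound 1
  filter_upwards [eventually_ge_atTop 1] with d hd
  have h1 : (1 : ℝ) ≤ (d : ℝ) := by exact_mod_cast hd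
  simp only [Real.norm_eq_abs, one_mul]
  rw [abs_of_nonneg (zpow_nonneg (by linarith) _), abs_of_nonneg (zpow_nonneg (by linarith) _)]
  exact zpow_le_zpow_right₀ h1 h

lemma mul_zpow_isBigO {f g : ℕ → ℝ} {a b : ℤ}
    (hf : f =O[atTop] fun d : ℕ => (d : ℝ) ^ a)
    (hg : g =O[atTop] fun d : ℕ => (d : ℝ) ^ b) :
    (fun d => f d * g d) =O[atTop] fun d : ℕ => (d : ℝ) ^ (a + b) := by
  refine (hf.mul hg).trans (IsBigO.of_bound 1 ?_)
  filter_upwards [eventually_ge_atTop 1] with d hd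
  have h0 : (d : ℝ) ≠ 0 := by positivity
  rw [zpow_add₀ h0, one_mul]

lemma pow_cast_isBigO (k : ℕ) :
    (fun d : ℕ => (d : ℝ) ^ k) =O[atTop] fun d : ℕ => (d : ℝ) ^ ((k : ℤ)) := by
  apply IsBigO.of_bound 1
  filter_upwards with d
  rw [one_mul, zpow_natCast]

lemma pow_div_isBigO (k : ℕ) :
    (fun d : ℕ => (d : ℝ) ^ k / Nat.factorial k) =O[atTop] fun d : ℕ => (d : ℝ) ^ ((k : ℤ)) := by
  have := (pow_cast_isBigO k).const_mul_left (1 / (Nat.factorial k : ℝ))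
  exact this.congr_left (fun d => by ring)

lemma prod_sub_pow_isBigO (k : ℕ) :
    (fun d : ℕ => (∏ i ∈ Finset.range k, ((d : ℝ) + i)) - (d : ℝ) ^ k)
      =O[atTop] fun d : ℕ => (d : ℝ) ^ ((k : ℤ) - 1) := by
  induction k with
  | zero => simpa using (isBigO_zero (fun d : ℕ => (d : ℝ) ^ ((0 : ℤ) - 1)) atTop)
  | succ k ih =>
      have key : ∀ d : ℕ,
          (∏ i ∈ Finset.range (k+1), ((d : ℝ) + i)) - (d : ℝ) ^ (k+1)
          = ((∏ i ∈ Finset.range k, ((d : ℝ) + i)) - (d : ℝ) ^ k) * ((d : ℝ) + k)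
            + (d : ℝ) ^ k * k := by
        intro d
        rw [Finset.prod_range_succ]
        ring
      simp only [key]
      have hb : (fun d : ℕ => (d : ℝ) + k) =O[atTop] fun d : ℕ => (d : ℝ) ^ (1 : ℤ) := by
        apply IsBigO.of_bound (1 + k)
        filter_upwards [eventually_ge_atTop 1] with d hd
        have h1 : (1 : ℝ) ≤ (d : ℝ) := by exact_mod_cast hd
        have hk : (0 : ℝ) ≤ (k : ℝ) := Nat.cast_nonneg k
        simp only [Real.norm_eq_abs, zpow_one]
        rw [abs_of_nonneg (by linarith), abs_of_nonneg (by linarith)]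
        nlinarith
      have h1 := mul_zpow_isBigO ih hb
      have h2 := ((pow_cast_isBigO k).const_mul_left (k : ℝ)).congr_left
        (fun d => by ring : ∀ d : ℕ, (k : ℝ) * (d : ℝ) ^ k = (d : ℝ) ^ k * k)
      rw [show (k : ℤ) - 1 + 1 = (k : ℤ) by ring] at h1
      exact (h1.add h2).trans
        (zpow_isBigO (show (k : ℤ) ≤ ((k + 1 : ℕ) : ℤ) - 1 by push_cast; omega))

lemma T_sub_isBigO (k : ℕ) :
    (fun d : ℕ => T k d - (d : ℝ) ^ k / Nat.factorial k)
      =O[atTop] fun d : ℕ => (d : ℝ) ^ ((k : ℤ) - 1) := by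
  have heq : (fun d : ℕ => T k d - (d : ℝ) ^ k / Nat.factorial k)
      = fun d : ℕ => (1 / (Nat.factorial k : ℝ)) *
          ((∏ i ∈ Finset.range k, ((d : ℝ) + i)) - (d : ℝ) ^ k) := by
    funext d
    rw [T_eq, pk]
    ring
  rw [heq]
  exact (prod_sub_pow_isBigO k).const_mul_left _

lemma T_isBigO (k : ℕ) :
    (fun d : ℕ => T k d) =O[atTop] fun d : ℕ => (d : ℝ) ^ ((k : ℤ)) := by
  have h1 := (T_sub_isBigO k).trans (zpow_isBigO (by omega : (k : ℤ) - 1 ≤ (k : ℤ)))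
  have := h1.add (pow_div_isBigO k)
  exact this.congr_left (fun d => by ring)

lemma triple_isBigO (k1 k2 k3 n : ℕ) (h : k1 + k2 + k3 = n) :
    (fun d : ℕ => T k1 d * T k2 d * T k3 d
        - (d : ℝ) ^ n / (Nat.factorial k1 * Nat.factorial k2 * Nat.factorial k3))
      =O[atTop] fun d : ℕ => (d : ℝ) ^ ((n : ℤ) - 1) := by
  have key : ∀ d : ℕ,
      T k1 d * T k2 d * T k3 d
        - (d : ℝ) ^ n / (Nat.factorial k1 * Nat.factorial k2 * Nat.factorial k3)
      = (T k1 d - (d : ℝ) ^ k1 / Nat.factorial k1) * T k2 d * T k3 d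
        + ((d : ℝ) ^ k1 / Nat.factorial k1) * (T k2 d - (d : ℝ) ^ k2 / Nat.factorial k2) * T k3 d
        + ((d : ℝ) ^ k1 / Nat.factorial k1) * ((d : ℝ) ^ k2 / Nat.factorial k2)
            * (T k3 d - (d : ℝ) ^ k3 / Nat.factorial k3) := by
    intro d
    have hpow : (d : ℝ) ^ n = (d : ℝ) ^ k1 * (d : ℝ) ^ k2 * (d : ℝ) ^ k3 := by
      rw [← pow_add, ← pow_add, h]
    have hf1 : (Nat.factorial k1 : ℝ) ≠ 0 := Nat.cast_ne_zero.2 (Nat.factorial_ne_zero _)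
    have hf2 : (Nat.factorial k2 : ℝ) ≠ 0 := Nat.cast_ne_zero.2 (Nat.factorial_ne_zero _)
    have hf3 : (Nat.factorial k3 : ℝ) ≠ 0 := Nat.cast_ne_zero.2 (Nat.factorial_ne_zero _)
    rw [hpow]
    field_simp
    ring
  simp only [key]
  have e1 : ((k1 : ℤ) - 1) + k2 + k3 = (n : ℤ) - 1 := by push_cast [← h]; ring
  have e2 : ((k1 : ℤ) + ((k2 : ℤ) - 1)) + k3 = (n : ℤ) - 1 := by push_cast [← h]; ring
  have e3 : ((k1 : ℤ) + (k2 : ℤ)) + ((k3 : ℤ) - 1) = (n : ℤ) - 1 := by push_cast [← h]; ring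
  have h1 := mul_zpow_isBigO (mul_zpow_isBigO (T_sub_isBigO k1) (T_isBigO k2)) (T_isBigO k3)
  have h2 := mul_zpow_isBigO (mul_zpow_isBigO (pow_div_isBigO k1) (T_sub_isBigO k2)) (T_isBigO k3)
  have h3 := mul_zpow_isBigO (mul_zpow_isBigO (pow_div_isBigO k1) (pow_div_isBigO k2)) (T_sub_isBigO k3)
  rw [e1] at h1
  rw [e2] at h2
  rw [e3] at h3
  exact (h1.add h2).add h3

lemma multinomial_id (δ : ℕ) (d : ℕ) :
    (∑ δ1 ∈ Finset.range (δ + 1), ∑ δ2 ∈ Finset.range (δ - δ1 + 1),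
      (12 : ℝ) ^ δ1 * (8 : ℝ) ^ δ2 * (4 : ℝ) ^ (δ - δ1 - δ2) *
        ((d : ℝ) ^ δ / (Nat.factorial δ1 * Nat.factorial δ2 * Nat.factorial (δ - δ1 - δ2))))
    = ((24 : ℝ) * d) ^ δ / Nat.factorial δ := by
  have h24 : ((24 : ℝ) * d) ^ δ = ((12 * d) + ((8 * d) + (4 * d))) ^ δ := by ring_nf
  rw [h24, add_pow, Finset.sum_div]
  apply Finset.sum_congr rfl
  intro δ1 h1
  have hδ1 : δ1 ≤ δ := Nat.lt_succ_iff.1 (Finset.mem_range.1 h1)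
  rw [add_pow, Finset.mul_sum, Finset.sum_mul, Finset.sum_div]
  apply Finset.sum_congr rfl
  intro δ2 h2
  have hδ2 : δ2 ≤ δ - δ1 := Nat.lt_succ_iff.1 (Finset.mem_range.1 h2)
  have hc1 : (δ.choose δ1 : ℝ) * Nat.factorial δ1 * Nat.factorial (δ - δ1) = Nat.factorial δ := by
    exact_mod_cast congrArg (Nat.cast (R := ℝ)) (Nat.choose_mul_factorial_mul_factorial hδ1)
  have hc2 : ((δ - δ1).choose δ2 : ℝ) * Nat.factorial δ2 * Nat.factorial (δ - δ1 - δ2)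
      = Nat.factorial (δ - δ1) := by
    exact_mod_cast congrArg (Nat.cast (R := ℝ)) (Nat.choose_mul_factorial_mul_factorial hδ2)
  have hpow : (d : ℝ) ^ δ = (d : ℝ) ^ δ1 * (d : ℝ) ^ δ2 * (d : ℝ) ^ (δ - δ1 - δ2) := by
    rw [← pow_add, ← pow_add]
    congr 1
    omega
  have hf1 : (Nat.factorial δ1 : ℝ) ≠ 0 := Nat.cast_ne_zero.2 (Nat.factorial_ne_zero _)
  have hf2 : (Nat.factorial δ2 : ℝ) ≠ 0 := Nat.cast_ne_zero.2 (Nat.factorial_ne_zero _)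
  have hf3 : (Nat.factorial (δ - δ1 - δ2) : ℝ) ≠ 0 := Nat.cast_ne_zero.2 (Nat.factorial_ne_zero _)
  have hfδ : (Nat.factorial δ : ℝ) ≠ 0 := Nat.cast_ne_zero.2 (Nat.factorial_ne_zero _)
  have hfδ1 : (Nat.factorial (δ - δ1) : ℝ) ≠ 0 := Nat.cast_ne_zero.2 (Nat.factorial_ne_zero _)
  have hch1 : (δ.choose δ1 : ℝ) ≠ 0 := Nat.cast_ne_zero.2 ((Nat.choose_pos hδ1).ne')
  have hch2 : ((δ - δ1).choose δ2 : ℝ) ≠ 0 := Nat.cast_ne_zero.2 ((Nat.choose_pos hδ2).ne')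
  rw [hpow, mul_pow, mul_pow, mul_pow, ← hc1, ← hc2]
  field_simp

/-- For fixed `δ ≥ 0`, summing over all ordered triples `(δ1, δ2, δ3)` of nonnegative
integers with `δ1 + δ2 + δ3 = δ`,
`Σ 12^{δ1} 8^{δ2} 4^{δ3} T_{δ1}(d) T_{δ2}(d) T_{δ3}(d) = (24d)^δ/δ! + O(d^{δ−1})`. -/
theorem stmt7 (δ : ℕ) :
    (fun d : ℕ =>
        (∑ δ1 ∈ Finset.range (δ + 1), ∑ δ2 ∈ Finset.range (δ - δ1 + 1),
          (12 : ℝ) ^ δ1 * (8) ^ δ2 * (4) ^ (δ - δ1 - δ2) *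
            T δ1 d * T δ2 d * T (δ - δ1 - δ2) d)
        - ((24) * (d : ℝ)) ^ δ / (Nat.factorial δ)) =O[atTop]
      fun d : ℕ => (d : ℝ) ^ ((δ : ℤ) - 1) := by
  have key : ∀ d : ℕ,
      (∑ δ1 ∈ Finset.range (δ + 1), ∑ δ2 ∈ Finset.range (δ - δ1 + 1),
          (12 : ℝ) ^ δ1 * (8) ^ δ2 * (4) ^ (δ - δ1 - δ2) *
            T δ1 d * T δ2 d * T (δ - δ1 - δ2) d)
        - ((24) * (d : ℝ)) ^ δ / (Nat.factorial δ)
      = ∑ δ1 ∈ Finset.range (δ + 1), ∑ δ2 ∈ Finset.range (δ - δ1 + 1),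
          (12 : ℝ) ^ δ1 * (8) ^ δ2 * (4) ^ (δ - δ1 - δ2) *
            (T δ1 d * T δ2 d * T (δ - δ1 - δ2) d
              - (d : ℝ) ^ δ / (Nat.factorial δ1 * Nat.factorial δ2 * Nat.factorial (δ - δ1 - δ2))) := by
    intro d
    rw [← multinomial_id δ d, ← Finset.sum_sub_distrib]
    apply Finset.sum_congr rfl
    intro δ1 _
    rw [← Finset.sum_sub_distrib]
    apply Finset.sum_congr rfl
    intro δ2 _
    ring
  simp only [key]
  apply IsBigO.fun_sum
  intro δ1 h1
  apply IsBigO.fun_sum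
  intro δ2 h2
  have hδ1 : δ1 ≤ δ := Nat.lt_succ_iff.1 (Finset.mem_range.1 h1)
  have hδ2 : δ2 ≤ δ - δ1 := Nat.lt_succ_iff.1 (Finset.mem_range.1 h2)
  exact (triple_isBigO δ1 δ2 (δ - δ1 - δ2) δ (by omega)).const_mul_left
    ((12 : ℝ) ^ δ1 * (8 : ℝ) ^ δ2 * (4 : ℝ) ^ (δ - δ1 - δ2))
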